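/- Let P and Q be disjoint nonempty compact connected subsets of the plane. Then there are at most two directions φ ∈ [0, 2π) such that the supporting closed half-plane in direction φ of the convex hull of P ∪ Q touches both P and Q (i.e., the boundary line of the half-plane containing P ∪ Q on one side intersects both P and Q). -/

import Mathlib

open Metric Real

/-- The unit direction vector of angle `φ` in the Euclidean plane. -/
noncomputable def dir (φ : ℝ) : EuclideanSpace ℝ (Fin 2) :=
  (WithLp.equiv 2 (Fin 2 → ℝ)).symm ![Real.cos φ, Real.sin φ]

section AuxWinding

open Complex Set


noncomputable def cutArg (α : ℝ) (z : ℂ) : ℝ :=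
  α + π + Complex.arg (-(Complex.exp ((-α : ℝ) * Complex.I)) * z)

lemma argAngle_exp (θ : ℝ) :
    (Complex.arg (Complex.exp ((θ : ℝ) * Complex.I)) : Real.Angle) = (θ : Real.Angle) := by
  rw [Complex.exp_mul_I]
  have h : (Complex.cos θ + Complex.sin θ * Complex.I)
      = (Real.Angle.cos (θ : Real.Angle) : ℂ) + (Real.Angle.sin (θ : Real.Angle) : ℂ) * Complex.I := by
    rw [Real.Angle.cos_coe, Real.Angle.sin_coe, Complex.ofReal_cos, Complex.ofReal_sin]
  rw [h, Complex.arg_cos_add_sin_mul_I_coe_angle]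

lemma cutArg_angle (α : ℝ) {z : ℂ} (hz : z ≠ 0) :
    ((cutArg α z : ℝ) : Real.Angle) = (Complex.arg z : Real.Angle) := by
  unfold cutArg
  have h1 : (-(Complex.exp ((-α : ℝ) * Complex.I))) ≠ 0 := neg_ne_zero.2 (Complex.exp_ne_zero _)
  rw [Real.Angle.coe_add, Real.Angle.coe_add,
    Complex.arg_mul_coe_angle h1 hz, Complex.arg_neg_coe_angle (Complex.exp_ne_zero _),
    argAngle_exp (-α), Real.Angle.coe_neg]
  have h2 : ((π:ℝ):Real.Angle) + ((π:ℝ):Real.Angle) = 0 := by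
    rw [← Real.Angle.coe_add, show (π+π : ℝ) = 2*π by ring, Real.Angle.coe_two_pi]
  rw [show ((α:Real.Angle) + ↑π + (-↑α + ↑π + ↑(Complex.arg z)) : Real.Angle)
      = ↑(Complex.arg z) + (↑π + ↑π) from by abel, h2, add_zero]

/-- half-plane bound for `cutArg`. -/
lemma cutArg_bounds (α : ℝ) {z : ℂ}
    (hre : (Complex.exp ((-α : ℝ) * Complex.I) * z).re ≤ 0) :
    α + π/2 ≤ cutArg α z ∧ cutArg α z ≤ α + 3*π/2 := by
  have h : 0 ≤ (-(Complex.exp ((-α : ℝ) * Complex.I)) * z).re := by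
    rw [neg_mul, Complex.neg_re]; linarith
  have := Complex.abs_arg_le_pi_div_two_iff.2 h
  rw [abs_le] at this
  unfold cutArg
  constructor <;> nlinarith [this.1, this.2]

/-- sector bound for `cutArg`. -/
lemma cutArg_bounds' (α : ℝ) {z : ℂ} (hz : z ≠ 0)
    (hre : (Complex.exp ((-α : ℝ) * Complex.I) * z).re ≤ ‖z‖ / 2) :
    α + π/3 ≤ cutArg α z ∧ cutArg α z ≤ α + 5*π/3 := by
  set ξ := -(Complex.exp ((-α : ℝ) * Complex.I)) * z with hξ
  have hξ0 : ξ ≠ 0 := mul_ne_zero (neg_ne_zero.2 (Complex.exp_ne_zero _)) hz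
  have habs : ‖ξ‖ = ‖z‖ := by
    rw [hξ, norm_mul, norm_neg, Complex.norm_exp_ofReal_mul_I, one_mul]
  have hre' : -(‖ξ‖ / 2) ≤ ξ.re := by
    rw [habs, hξ, neg_mul, Complex.neg_re]; linarith
  have hcos : Real.cos (Complex.arg ξ) = ξ.re / ‖ξ‖ := Complex.cos_arg hξ0
  have hpos : 0 < ‖ξ‖ := (norm_pos_iff.mpr hξ0)
  have hargle : |Complex.arg ξ| ≤ 2*π/3 := by
    by_contra hgt
    push_neg at hgt
    have h1 : Real.cos |Complex.arg ξ| < Real.cos (2*π/3) := by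
      apply Real.strictAntiOn_cos
      · constructor <;> [positivity; linarith [Real.pi_pos]]
      · exact ⟨abs_nonneg _, Complex.abs_arg_le_pi _⟩
      · exact hgt
    have h2 : Real.cos (2*π/3) = -(1/2) := by
      rw [show (2*π/3 : ℝ) = π - π/3 by ring, Real.cos_pi_sub, Real.cos_pi_div_three]
    rw [Real.cos_abs, hcos, h2] at h1
    have := (div_lt_iff₀ hpos).1 h1
    nlinarith
  rw [abs_le] at hargle
  unfold cutArg
  constructor <;> nlinarith [hargle.1, hargle.2, Real.pi_pos]

lemma angle_eq_real {x y : ℝ} (h : ((x : ℝ) : Real.Angle) = (y : Real.Angle))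
    (hxy : |x - y| < 2*π) : x = y := by
  obtain ⟨k, hk⟩ := Real.Angle.angle_eq_iff_two_pi_dvd_sub.1 h
  have hpi := Real.pi_pos
  have : |(k:ℝ)| < 1 := by
    rw [hk] at hxy
    rw [abs_mul, abs_of_pos (by linarith : (0:ℝ) < 2*π)] at hxy
    nlinarith [abs_nonneg (k:ℝ)]
  have hk0 : k = 0 := by
    have h1 : |k| < 1 := by exact_mod_cast (by rw [← Int.cast_abs] at this; exact_mod_cast this : |(k:ℝ)| < ((1:ℤ):ℝ))
    exact Int.abs_lt_one_iff.1 h1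
  rw [hk0] at hk; push_cast at hk; linarith

/-- key step: the lift increment equals the principal arg of the ratio. -/
lemma cutArg_step (α : ℝ) {z z' : ℂ} (hz : z ≠ 0) (hz' : z' ≠ 0)
    (hsz : (Complex.exp ((-α : ℝ) * Complex.I) * z).re ≤ ‖z‖ / 2)
    (hsz' : (Complex.exp ((-α : ℝ) * Complex.I) * z').re ≤ ‖z'‖ / 2)
    (hstep : |Complex.arg (z' / z)| < π/2) :
    cutArg α z' - cutArg α z = Complex.arg (z' / z) := by
  have hb := cutArg_bounds' α hz hsz
  have hb' := cutArg_bounds' α hz' hsz'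
  have hang : ((cutArg α z' - cutArg α z : ℝ) : Real.Angle)
      = ((Complex.arg (z' / z) : ℝ) : Real.Angle) := by
    rw [Real.Angle.coe_sub, cutArg_angle α hz, cutArg_angle α hz',
      Complex.arg_div_coe_angle hz' hz]
  apply angle_eq_real hang
  have hpi := Real.pi_pos
  rw [abs_sub_lt_iff]
  rw [abs_lt] at hstep
  constructor <;> nlinarith [hb.1, hb.2, hb'.1, hb'.2, hstep.1, hstep.2]

lemma arg_ratio_small {z z' : ℂ} (hz : z ≠ 0) (h : ‖z' - z‖ < ‖z‖) :
    |Complex.arg (z' / z)| < π/2 := by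
  have hzpos : 0 < ‖z‖ := norm_pos_iff.mpr hz
  rw [Complex.abs_arg_lt_pi_div_two_iff]
  left
  have : z' / z = 1 + (z' - z) / z := by field_simp; ring
  rw [this, Complex.add_re, Complex.one_re]
  have h1 : |((z' - z) / z).re| ≤ ‖(z' - z) / z‖ := Complex.abs_re_le_norm _
  rw [norm_div] at h1
  have h2 : ‖z' - z‖ / ‖z‖ < 1 := (div_lt_one hzpos).2 h
  have := abs_le.1 h1
  linarith [this.1]

lemma edge_sum (α : ℝ) (N : ℕ) (z : ℕ → ℂ)
    (h0 : ∀ k, k ≤ N → z k ≠ 0)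
    (hsec : ∀ k, k ≤ N → (Complex.exp ((-α : ℝ) * Complex.I) * z k).re ≤ ‖z k‖ / 2)
    (hstep : ∀ k, k < N → |Complex.arg (z (k+1) / z k)| < π/2) :
    ∑ k ∈ Finset.range N, Complex.arg (z (k+1) / z k) = cutArg α (z N) - cutArg α (z 0) := by
  induction N with
  | zero => simp
  | succ n ih =>
    rw [Finset.sum_range_succ, ih (fun k hk => h0 k (by omega))
      (fun k hk => hsec k (by omega)) (fun k hk => hstep k (by omega))]
    have := cutArg_step α (h0 n (by omega)) (h0 (n+1) le_rfl)
      (hsec n (by omega)) (hsec (n+1) le_rfl) (hstep n (by omega))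
    linarith

lemma square_lemma {w1 w2 w3 w4 : ℂ} (h1 : w1 ≠ 0) (h2 : w2 ≠ 0) (h3 : w3 ≠ 0) (h4 : w4 ≠ 0)
    (d12 : |Complex.arg (w2 / w1)| < π/2) (d23 : |Complex.arg (w3 / w2)| < π/2)
    (d14 : |Complex.arg (w4 / w1)| < π/2) (d43 : |Complex.arg (w3 / w4)| < π/2) :
    Complex.arg (w2 / w1) + Complex.arg (w3 / w2)
      = Complex.arg (w4 / w1) + Complex.arg (w3 / w4) := by
  have hpi := Real.pi_pos
  have hang : ((Complex.arg (w2 / w1) + Complex.arg (w3 / w2) : ℝ) : Real.Angle)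
      = ((Complex.arg (w4 / w1) + Complex.arg (w3 / w4) : ℝ) : Real.Angle) := by
    rw [Real.Angle.coe_add, Real.Angle.coe_add, Complex.arg_div_coe_angle h2 h1,
      Complex.arg_div_coe_angle h3 h2, Complex.arg_div_coe_angle h4 h1,
      Complex.arg_div_coe_angle h3 h4]
    abel
  have heq := angle_eq_real hang ?_
  · linarith
  · rw [abs_lt] at d12 d23 d14 d43 ⊢
    constructor <;> nlinarith [d12.1, d12.2, d23.1, d23.2, d14.1, d14.2, d43.1, d43.2]


lemma exp_neg_add_pi (φ : ℝ) :
    Complex.exp ((-(φ+π) : ℝ) * Complex.I) = -Complex.exp ((-φ : ℝ) * Complex.I) := by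
  rw [show ((-(φ+π):ℝ):ℂ) * Complex.I = ((-φ:ℝ):ℂ)*Complex.I + -((π:ℂ)*Complex.I) by
    push_cast; ring, Complex.exp_add, Complex.exp_neg, Complex.exp_pi_mul_I]
  norm_num

lemma exp_mul_exp_neg (φ : ℝ) :
    Complex.exp ((-φ : ℝ) * Complex.I) * Complex.exp ((φ : ℝ) * Complex.I) = 1 := by
  rw [← Complex.exp_add, show ((-φ:ℝ):ℂ)*Complex.I + ((φ:ℝ):ℂ)*Complex.I = 0 by push_cast; ring,
    Complex.exp_zero]

set_option maxHeartbeats 2000000 in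
theorem core (P Q : Set ℂ) (hPne : P.Nonempty) (hQne : Q.Nonempty) (hPc : IsCompact P)
    (hQc : IsCompact Q) (hPconn : IsConnected P) (hQconn : IsConnected Q)
    (hdisj : Disjoint P Q)
    (φ1 φ2 : ℝ) (hψ1 : 0 < φ2 - φ1) (hψ2 : φ2 - φ1 < 2*π)
    (p1 q1 p2 q2 : ℂ) (s1 s2 : ℝ) (hs1 : 0 < s1) (hs2 : 0 < s2)
    (hp1 : p1 ∈ P) (hq1 : q1 ∈ Q) (hp2 : p2 ∈ P) (hq2 : q2 ∈ Q)
    (hsup1 : ∀ x ∈ P ∪ Q, (Complex.exp ((-φ1 : ℝ) * Complex.I) * (x - p1)).re ≤ 0)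
    (hsup2 : ∀ x ∈ P ∪ Q, (Complex.exp ((-φ2 : ℝ) * Complex.I) * (x - p2)).re ≤ 0)
    (he1 : q1 - p1 = (s1 : ℂ) * (Complex.I * Complex.exp ((φ1 : ℝ) * Complex.I)))
    (he2 : q2 - p2 = (s2 : ℂ) * (Complex.I * Complex.exp ((φ2 : ℝ) * Complex.I))) :
    False := by
  have hpi := Real.pi_pos
  -- distance between P and Q
  obtain ⟨x₀, hx₀P, hx₀min⟩ := hPc.exists_isMinOn hPne
    ((Metric.continuous_infDist_pt Q).continuousOn)
  set δ := Metric.infDist x₀ Q with hδdef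
  have hδpos : 0 < δ := by
    rw [hδdef, ← (hQc.isClosed.notMem_iff_infDist_pos hQne)]
    exact fun hmem => (hdisj.ne_of_mem hx₀P hmem) rfl
  have hδle : ∀ x ∈ P, ∀ y ∈ Q, δ ≤ dist x y := by
    intro x hx y hy
    exact le_trans (hx₀min hx) (Metric.infDist_le_dist_of_mem hy)
  set ε := δ/4 with hεdef
  set ρ := δ/2 with hρdef
  have hεpos : 0 < ε := by positivity
  have hρpos : 0 < ρ := by positivity
  set TP := Metric.thickening ε P with hTPdef
  set TQ := Metric.thickening ε Q with hTQdef
  -- thickenings are open, connected, hence path-connected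
  have hthick : ∀ (S : Set ℂ), S.Nonempty → IsConnected S → IsPathConnected (Metric.thickening ε S) := by
    intro S hSne hSconn
    rw [← (Metric.isOpen_thickening).isConnected_iff_isPathConnected]
    constructor
    · obtain ⟨x, hx⟩ := hSne
      exact ⟨x, Metric.self_subset_thickening hεpos S hx⟩
    · have heq : Metric.thickening ε S = ⋃₀ ((fun x => Metric.ball x ε ∪ S) '' S) := by
        apply Subset.antisymm
        · rw [Metric.thickening_eq_biUnion_ball]
          intro y hy
          simp only [mem_iUnion, exists_prop] at hy
          obtain ⟨x, hx, hball⟩ := hy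
          exact ⟨_, ⟨x, hx, rfl⟩, Or.inl hball⟩
        · rintro y ⟨_, ⟨x, hx, rfl⟩, hy⟩
          rcases hy with hy | hy
          · rw [Metric.thickening_eq_biUnion_ball]
            exact mem_iUnion₂.2 ⟨x, hx, hy⟩
          · exact Metric.self_subset_thickening hεpos S hy
      rw [heq]
      obtain ⟨x₁, hx₁⟩ := hSne
      apply isPreconnected_sUnion x₁
      · rintro _ ⟨x, hx, rfl⟩
        exact Or.inr hx₁
      · rintro _ ⟨x, hx, rfl⟩
        exact IsPreconnected.union x (Metric.mem_ball_self hεpos) hx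
          (convex_ball x ε).isPreconnected hSconn.isPreconnected
  obtain ⟨γ, hγmem⟩ : JoinedIn TP p1 p2 := (hthick P hPne hPconn).joinedIn p1
    (Metric.self_subset_thickening hεpos P hp1) p2 (Metric.self_subset_thickening hεpos P hp2)
  obtain ⟨σ, hσmem⟩ : JoinedIn TQ q1 q2 := (hthick Q hQne hQconn).joinedIn q1
    (Metric.self_subset_thickening hεpos Q hq1) q2 (Metric.self_subset_thickening hεpos Q hq2)
  have hγTP : ∀ s : ℝ, γ.extend s ∈ TP := by
    intro s
    have : γ.extend s ∈ Set.range (⇑γ) := by rw [← Path.extend_range]; exact ⟨s, rfl⟩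
    obtain ⟨t, ht⟩ := this
    rw [← ht]; exact hγmem t
  have hσTQ : ∀ s : ℝ, σ.extend s ∈ TQ := by
    intro s
    have : σ.extend s ∈ Set.range (⇑σ) := by rw [← Path.extend_range]; exact ⟨s, rfl⟩
    obtain ⟨t, ht⟩ := this
    rw [← ht]; exact hσmem t
  -- points of TP are within ε of P
  have hTPnear : ∀ y ∈ TP, ∃ x ∈ P, dist y x < ε := fun y hy => Metric.mem_thickening_iff.1 hy
  have hTQnear : ∀ y ∈ TQ, ∃ x ∈ Q, dist y x < ε := fun y hy => Metric.mem_thickening_iff.1 hy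
  -- distance lower bound
  have hlow : ∀ y ∈ TP, ∀ z ∈ TQ, ρ ≤ ‖y - z‖ := by
    intro y hy z hz
    obtain ⟨x, hx, hdx⟩ := hTPnear y hy
    obtain ⟨x', hx', hdx'⟩ := hTQnear z hz
    have h1 := hδle x hx x' hx'
    have h2 : dist x x' ≤ dist x y + dist y z + dist z x' := dist_triangle4 x y z x'
    rw [dist_comm x y] at h2
    have : dist y z = ‖y - z‖ := by rw [Complex.dist_eq]
    rw [this] at h2
    rw [hρdef]
    rw [hεdef] at hdx hdx'
    linarith
  -- uniform continuity moduli
  have hγuc := (isCompact_Icc (a := (0:ℝ)) (b := 1)).uniformContinuousOn_of_continuous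
    γ.continuous_extend.continuousOn
  have hσuc := (isCompact_Icc (a := (0:ℝ)) (b := 1)).uniformContinuousOn_of_continuous
    σ.continuous_extend.continuousOn
  rw [Metric.uniformContinuousOn_iff] at hγuc hσuc
  obtain ⟨η₁, hη₁pos, hη₁⟩ := hγuc (ρ/2) (by positivity)
  obtain ⟨η₂, hη₂pos, hη₂⟩ := hσuc (ρ/2) (by positivity)
  have hγd : ∀ a b : ℝ, a ∈ Set.Icc (0:ℝ) 1 → b ∈ Set.Icc (0:ℝ) 1 → |a - b| < η₁ →
      ‖γ.extend a - γ.extend b‖ < ρ/2 := by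
    intro a b ha hb hab
    have := hη₁ a ha b hb (by rwa [Real.dist_eq])
    rwa [Complex.dist_eq] at this
  have hσd : ∀ a b : ℝ, a ∈ Set.Icc (0:ℝ) 1 → b ∈ Set.Icc (0:ℝ) 1 → |a - b| < η₂ →
      ‖σ.extend a - σ.extend b‖ < ρ/2 := by
    intro a b ha hb hab
    have := hη₂ a ha b hb (by rwa [Real.dist_eq])
    rwa [Complex.dist_eq] at this
  obtain ⟨N, hN⟩ := exists_nat_gt (max (1/η₁) (1/η₂))
  have hN1 : (1:ℝ)/η₁ < N := lt_of_le_of_lt (le_max_left _ _) hN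
  have hN2 : (1:ℝ)/η₂ < N := lt_of_le_of_lt (le_max_right _ _) hN
  have hNpos : 0 < (N:ℝ) := lt_trans (by positivity) hN1
  have hNnat : 0 < N := by exact_mod_cast hNpos
  have hinv1 : 1/(N:ℝ) < η₁ := by
    rw [div_lt_iff₀ hNpos]
    rw [div_lt_iff₀ hη₁pos] at hN1
    linarith [hN1]
  have hinv2 : 1/(N:ℝ) < η₂ := by
    rw [div_lt_iff₀ hNpos]
    rw [div_lt_iff₀ hη₂pos] at hN2
    linarith [hN2]
  -- the grid
  set w : ℕ → ℕ → ℂ := fun i j => γ.extend ((i:ℝ)/N) - σ.extend ((j:ℝ)/N) with hwdef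
  have hmem : ∀ k : ℕ, k ≤ N → ((k:ℝ)/N) ∈ Set.Icc (0:ℝ) 1 := by
    intro k hk
    constructor
    · positivity
    · rw [div_le_one hNpos]; exact_mod_cast hk
  have habs : ∀ i j : ℕ, ρ ≤ ‖w i j‖ :=
    fun i j => hlow _ (hγTP _) _ (hσTQ _)
  have hne : ∀ i j : ℕ, w i j ≠ 0 := by
    intro i j h
    have h2 := habs i j
    rw [h] at h2
    simp only [norm_zero] at h2
    linarith
  have hgap : ∀ i : ℕ, i < N → |(((i+1:ℕ)):ℝ)/N - (i:ℝ)/N| < min η₁ η₂ := by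
    intro i hi
    push_cast
    rw [show ((i:ℝ)+1)/N - (i:ℝ)/N = 1/N by field_simp; ring]
    rw [abs_of_pos (by positivity)]
    exact lt_min hinv1 hinv2
  -- step bounds
  have hstepH : ∀ i j : ℕ, i < N → |Complex.arg (w (i+1) j / w i j)| < π/2 := by
    intro i j hi
    apply arg_ratio_small (hne i j)
    have heq : w (i+1) j - w i j = γ.extend ((((i+1:ℕ)):ℝ)/N) - γ.extend ((i:ℝ)/N) := by
      simp only [hwdef]; ring
    rw [heq]
    calc ‖γ.extend ((((i+1:ℕ)):ℝ)/N) - γ.extend ((i:ℝ)/N)‖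
        < ρ/2 := hγd _ _ (hmem (i+1) (by omega)) (hmem i (le_of_lt hi))
          (lt_of_lt_of_le (hgap i hi) (min_le_left _ _))
      _ < ρ := by linarith
      _ ≤ ‖w i j‖ := habs i j
  have hstepV : ∀ i j : ℕ, j < N → |Complex.arg (w i (j+1) / w i j)| < π/2 := by
    intro i j hj
    apply arg_ratio_small (hne i j)
    have heq : w i (j+1) - w i j = -(σ.extend ((((j+1:ℕ)):ℝ)/N) - σ.extend ((j:ℝ)/N)) := by
      simp only [hwdef]; ring
    rw [heq, norm_neg]
    calc ‖σ.extend ((((j+1:ℕ)):ℝ)/N) - σ.extend ((j:ℝ)/N)‖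
        < ρ/2 := hσd _ _ (hmem (j+1) (by omega)) (hmem j (le_of_lt hj))
          (lt_of_lt_of_le (hgap j hj) (min_le_right _ _))
      _ < ρ := by linarith
      _ ≤ ‖w i j‖ := habs i j
  -- corner identifications
  have hz : ((0:ℕ):ℝ)/N = 0 := by norm_num
  have ho : ((N:ℕ):ℝ)/N = 1 := div_self hNpos.ne'
  have hw00 : w 0 0 = p1 - q1 := by
    simp only [hwdef, hz, Path.extend_zero]
  have hwN0 : w N 0 = p2 - q1 := by
    simp only [hwdef, hz, ho, Path.extend_zero, Path.extend_one]
  have hw0N : w 0 N = p1 - q2 := by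
    simp only [hwdef, hz, ho, Path.extend_zero, Path.extend_one]
  have hwNN : w N N = p2 - q2 := by
    simp only [hwdef, ho, Path.extend_one]
  -- products with the supporting directions
  have hpq1 : Complex.exp ((-φ1:ℝ) * Complex.I) * (p1 - q1) = -((s1:ℂ) * Complex.I) := by
    calc Complex.exp ((-φ1:ℝ)*Complex.I) * (p1 - q1)
        = -(Complex.exp ((-φ1:ℝ)*Complex.I) * (q1 - p1)) := by ring
      _ = -((s1:ℂ) * Complex.I * (Complex.exp ((-φ1:ℝ)*Complex.I)
            * Complex.exp ((φ1:ℝ)*Complex.I))) := by rw [he1]; ring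
      _ = -((s1:ℂ) * Complex.I) := by rw [exp_mul_exp_neg]; ring
  have hpq2 : Complex.exp ((-φ2:ℝ) * Complex.I) * (p2 - q2) = -((s2:ℂ) * Complex.I) := by
    calc Complex.exp ((-φ2:ℝ)*Complex.I) * (p2 - q2)
        = -(Complex.exp ((-φ2:ℝ)*Complex.I) * (q2 - p2)) := by ring
      _ = -((s2:ℂ) * Complex.I * (Complex.exp ((-φ2:ℝ)*Complex.I)
            * Complex.exp ((φ2:ℝ)*Complex.I))) := by rw [he2]; ring
      _ = -((s2:ℂ) * Complex.I) := by rw [exp_mul_exp_neg]; ring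
  have hre1pq : (Complex.exp ((-φ1:ℝ) * Complex.I) * (p1 - q1)).re = 0 := by
    rw [hpq1]; simp
  have hre2pq : (Complex.exp ((-φ2:ℝ) * Complex.I) * (p2 - q2)).re = 0 := by
    rw [hpq2]; simp
  -- real part of exp * small vector is at most its abs
  have hsmall : ∀ (θ : ℝ) (a b : ℂ), dist a b < ε →
      (Complex.exp ((θ:ℝ) * Complex.I) * (a - b)).re ≤ ε := by
    intro θ a b hab
    calc (Complex.exp ((θ:ℝ) * Complex.I) * (a - b)).re
        ≤ ‖Complex.exp ((θ:ℝ) * Complex.I) * (a - b)‖ := Complex.re_le_norm _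
      _ = ‖a - b‖ := by
          rw [norm_mul, Complex.norm_exp_ofReal_mul_I, one_mul]
      _ = dist a b := by rw [Complex.dist_eq]
      _ ≤ ε := le_of_lt hab
  have hεhalf : ∀ i j : ℕ, ε ≤ ‖w i j‖ / 2 := by
    intro i j
    have := habs i j
    rw [hεdef]; rw [hρdef] at this
    linarith
  -- edge sector bounds
  have hE1 : ∀ i : ℕ, i ≤ N →
      (Complex.exp ((-φ1:ℝ) * Complex.I) * (w i 0)).re ≤ ‖w i 0‖ / 2 := by
    intro i hi
    obtain ⟨x, hx, hdx⟩ := hTPnear (γ.extend ((i:ℝ)/N)) (hγTP _)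
    have hsplit : Complex.exp ((-φ1:ℝ)*Complex.I) * (w i 0)
        = Complex.exp ((-φ1:ℝ)*Complex.I) * (γ.extend ((i:ℝ)/N) - x)
          + Complex.exp ((-φ1:ℝ)*Complex.I) * (x - p1)
          + Complex.exp ((-φ1:ℝ)*Complex.I) * (p1 - q1) := by
      simp only [hwdef, hz, Path.extend_zero]; ring
    rw [hsplit, Complex.add_re, Complex.add_re]
    have b1 := hsmall (-φ1) _ _ hdx
    have b2 := hsup1 x (Or.inl hx)
    have b4 := hεhalf i 0
    linarith [hre1pq]
  have hE3 : ∀ i : ℕ, i ≤ N →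
      (Complex.exp ((-φ2:ℝ) * Complex.I) * (w i N)).re ≤ ‖w i N‖ / 2 := by
    intro i hi
    obtain ⟨x, hx, hdx⟩ := hTPnear (γ.extend ((i:ℝ)/N)) (hγTP _)
    have hsplit : Complex.exp ((-φ2:ℝ)*Complex.I) * (w i N)
        = Complex.exp ((-φ2:ℝ)*Complex.I) * (γ.extend ((i:ℝ)/N) - x)
          + Complex.exp ((-φ2:ℝ)*Complex.I) * (x - p2)
          + Complex.exp ((-φ2:ℝ)*Complex.I) * (p2 - q2) := by
      simp only [hwdef, ho, Path.extend_one]; ring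
    rw [hsplit, Complex.add_re, Complex.add_re]
    have b1 := hsmall (-φ2) _ _ hdx
    have b2 := hsup2 x (Or.inl hx)
    have b4 := hεhalf i N
    linarith [hre2pq]
  have hE2 : ∀ j : ℕ, j ≤ N →
      (Complex.exp ((-(φ2+π):ℝ) * Complex.I) * (w N j)).re ≤ ‖w N j‖ / 2 := by
    intro j hj
    obtain ⟨x, hx, hdx⟩ := hTQnear (σ.extend ((j:ℝ)/N)) (hσTQ _)
    rw [exp_neg_add_pi]
    have hsplit : -Complex.exp ((-φ2:ℝ)*Complex.I) * (w N j)
        = Complex.exp ((-φ2:ℝ)*Complex.I) * (σ.extend ((j:ℝ)/N) - x)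
          + Complex.exp ((-φ2:ℝ)*Complex.I) * (x - p2) := by
      simp only [hwdef, ho, Path.extend_one]; ring
    rw [hsplit, Complex.add_re]
    have b1 := hsmall (-φ2) _ _ hdx
    have b2 := hsup2 x (Or.inr hx)
    have b4 := hεhalf N j
    linarith
  have hE4 : ∀ j : ℕ, j ≤ N →
      (Complex.exp ((-(φ1+π):ℝ) * Complex.I) * (w 0 j)).re ≤ ‖w 0 j‖ / 2 := by
    intro j hj
    obtain ⟨x, hx, hdx⟩ := hTQnear (σ.extend ((j:ℝ)/N)) (hσTQ _)
    rw [exp_neg_add_pi]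
    have hsplit : -Complex.exp ((-φ1:ℝ)*Complex.I) * (w 0 j)
        = Complex.exp ((-φ1:ℝ)*Complex.I) * (σ.extend ((j:ℝ)/N) - x)
          + Complex.exp ((-φ1:ℝ)*Complex.I) * (x - p1) := by
      simp only [hwdef, hz, Path.extend_zero]; ring
    rw [hsplit, Complex.add_re]
    have b1 := hsmall (-φ1) _ _ hdx
    have b2 := hsup1 x (Or.inr hx)
    have b4 := hεhalf 0 j
    linarith
  -- the four edge sums
  have hH0 : ∑ k ∈ Finset.range N, Complex.arg (w (k+1) 0 / w k 0)
      = cutArg φ1 (w N 0) - cutArg φ1 (w 0 0) :=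
    edge_sum φ1 N (fun k => w k 0) (fun k _ => hne k 0) (fun k hk => hE1 k hk)
      (fun k hk => hstepH k 0 hk)
  have hHN : ∑ k ∈ Finset.range N, Complex.arg (w (k+1) N / w k N)
      = cutArg φ2 (w N N) - cutArg φ2 (w 0 N) :=
    edge_sum φ2 N (fun k => w k N) (fun k _ => hne k N) (fun k hk => hE3 k hk)
      (fun k hk => hstepH k N hk)
  have hVN : ∑ k ∈ Finset.range N, Complex.arg (w N (k+1) / w N k)
      = cutArg (φ2+π) (w N N) - cutArg (φ2+π) (w N 0) :=
    edge_sum (φ2+π) N (fun k => w N k) (fun k _ => hne N k) (fun k hk => hE2 k hk)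
      (fun k hk => hstepV N k hk)
  have hV0 : ∑ k ∈ Finset.range N, Complex.arg (w 0 (k+1) / w 0 k)
      = cutArg (φ1+π) (w 0 N) - cutArg (φ1+π) (w 0 0) :=
    edge_sum (φ1+π) N (fun k => w 0 k) (fun k _ => hne 0 k) (fun k hk => hE4 k hk)
      (fun k hk => hstepV 0 k hk)
  -- master telescoping identity
  have hrow : ∀ j : ℕ, j < N →
      (∑ i ∈ Finset.range N, Complex.arg (w (i+1) (j+1) / w i (j+1)))
        = (∑ i ∈ Finset.range N, Complex.arg (w (i+1) j / w i j))
          + Complex.arg (w N (j+1) / w N j) - Complex.arg (w 0 (j+1) / w 0 j) := by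
    intro j hj
    have h2 : ∑ i ∈ Finset.range N, Complex.arg (w (i+1) j / w i j)
          + ∑ i ∈ Finset.range N, Complex.arg (w (i+1) (j+1) / w (i+1) j)
        = ∑ i ∈ Finset.range N, Complex.arg (w i (j+1) / w i j)
          + ∑ i ∈ Finset.range N, Complex.arg (w (i+1) (j+1) / w i (j+1)) := by
      rw [← Finset.sum_add_distrib, ← Finset.sum_add_distrib]
      refine Finset.sum_congr rfl (fun i hi => ?_)
      have hiN := Finset.mem_range.1 hi
      exact square_lemma (hne i j) (hne (i+1) j) (hne (i+1) (j+1)) (hne i (j+1))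
        (hstepH i j hiN) (hstepV (i+1) j hj) (hstepV i j hj) (hstepH i (j+1) hiN)
    have h3 : ∑ i ∈ Finset.range N, Complex.arg (w (i+1) (j+1) / w (i+1) j)
          - ∑ i ∈ Finset.range N, Complex.arg (w i (j+1) / w i j)
        = Complex.arg (w N (j+1) / w N j) - Complex.arg (w 0 (j+1) / w 0 j) := by
      rw [← Finset.sum_sub_distrib]
      exact Finset.sum_range_sub (fun i => Complex.arg (w i (j+1) / w i j)) N
    linarith
  have hmaster : (∑ k ∈ Finset.range N, Complex.arg (w (k+1) N / w k N))
        - (∑ k ∈ Finset.range N, Complex.arg (w (k+1) 0 / w k 0))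
      = (∑ k ∈ Finset.range N, Complex.arg (w N (k+1) / w N k))
        - (∑ k ∈ Finset.range N, Complex.arg (w 0 (k+1) / w 0 k)) := by
    have h4 := Finset.sum_range_sub
      (fun j => ∑ i ∈ Finset.range N, Complex.arg (w (i+1) j / w i j)) N
    have h5 : ∀ j ∈ Finset.range N,
        (∑ i ∈ Finset.range N, Complex.arg (w (i+1) (j+1) / w i (j+1)))
          - (∑ i ∈ Finset.range N, Complex.arg (w (i+1) j / w i j))
        = Complex.arg (w N (j+1) / w N j) - Complex.arg (w 0 (j+1) / w 0 j) := by
      intro j hj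
      have := hrow j (Finset.mem_range.1 hj)
      linarith
    rw [Finset.sum_congr rfl h5] at h4
    rw [Finset.sum_sub_distrib] at h4
    linarith [h4]
  -- corner cut-argument values
  have hcut1 : cutArg φ1 (w 0 0) = φ1 + π + π/2 := by
    rw [hw00]
    unfold cutArg
    have h : -(Complex.exp ((-φ1:ℝ) * Complex.I)) * (p1 - q1) = (s1:ℂ) * Complex.I := by
      rw [show -(Complex.exp ((-φ1:ℝ) * Complex.I)) * (p1 - q1)
        = -(Complex.exp ((-φ1:ℝ) * Complex.I) * (p1 - q1)) by ring, hpq1]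
      ring
    rw [h, Complex.arg_real_mul _ hs1, Complex.arg_I]
  have hcut2 : cutArg (φ1+π) (w 0 0) = (φ1+π) + π + -(π/2) := by
    rw [hw00]
    unfold cutArg
    have h : -(Complex.exp ((-(φ1+π):ℝ) * Complex.I)) * (p1 - q1) = (s1:ℂ) * -Complex.I := by
      rw [exp_neg_add_pi]
      rw [show -(-(Complex.exp ((-φ1:ℝ) * Complex.I))) * (p1 - q1)
        = Complex.exp ((-φ1:ℝ) * Complex.I) * (p1 - q1) by ring, hpq1]
      ring
    rw [h, Complex.arg_real_mul _ hs1, Complex.arg_neg_I]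
  have hcut3 : cutArg φ2 (w N N) = φ2 + π + π/2 := by
    rw [hwNN]
    unfold cutArg
    have h : -(Complex.exp ((-φ2:ℝ) * Complex.I)) * (p2 - q2) = (s2:ℂ) * Complex.I := by
      rw [show -(Complex.exp ((-φ2:ℝ) * Complex.I)) * (p2 - q2)
        = -(Complex.exp ((-φ2:ℝ) * Complex.I) * (p2 - q2)) by ring, hpq2]
      ring
    rw [h, Complex.arg_real_mul _ hs2, Complex.arg_I]
  have hcut4 : cutArg (φ2+π) (w N N) = (φ2+π) + π + -(π/2) := by
    rw [hwNN]
    unfold cutArg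
    have h : -(Complex.exp ((-(φ2+π):ℝ) * Complex.I)) * (p2 - q2) = (s2:ℂ) * -Complex.I := by
      rw [exp_neg_add_pi]
      rw [show -(-(Complex.exp ((-φ2:ℝ) * Complex.I))) * (p2 - q2)
        = Complex.exp ((-φ2:ℝ) * Complex.I) * (p2 - q2) by ring, hpq2]
      ring
    rw [h, Complex.arg_real_mul _ hs2, Complex.arg_neg_I]
  -- half-plane bounds at the two off corners
  have hbA : cutArg φ1 (w N 0) ≤ φ1 + 3*π/2 := by
    refine (cutArg_bounds φ1 ?_).2
    have hsplit : Complex.exp ((-φ1:ℝ)*Complex.I) * (w N 0)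
        = Complex.exp ((-φ1:ℝ)*Complex.I) * (p2 - p1)
          + Complex.exp ((-φ1:ℝ)*Complex.I) * (p1 - q1) := by
      rw [hwN0]; ring
    rw [hsplit, Complex.add_re]
    have b2 := hsup1 p2 (Or.inl hp2)
    linarith [hre1pq]
  have hbB : (φ2+π) + π/2 ≤ cutArg (φ2+π) (w N 0) := by
    refine (cutArg_bounds (φ2+π) ?_).1
    rw [exp_neg_add_pi]
    have hsplit : -Complex.exp ((-φ2:ℝ)*Complex.I) * (w N 0)
        = Complex.exp ((-φ2:ℝ)*Complex.I) * (q1 - p2) := by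
      rw [hwN0]; ring
    rw [hsplit]
    exact hsup2 q1 (Or.inr hq1)
  have hbC : cutArg φ2 (w 0 N) ≤ φ2 + 3*π/2 := by
    refine (cutArg_bounds φ2 ?_).2
    have hsplit : Complex.exp ((-φ2:ℝ)*Complex.I) * (w 0 N)
        = Complex.exp ((-φ2:ℝ)*Complex.I) * (p1 - p2)
          + Complex.exp ((-φ2:ℝ)*Complex.I) * (p2 - q2) := by
      rw [hw0N]; ring
    rw [hsplit, Complex.add_re]
    have b2 := hsup2 p1 (Or.inl hp1)
    linarith [hre2pq]
  have hbD : (φ1+π) + π/2 ≤ cutArg (φ1+π) (w 0 N) := by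
    refine (cutArg_bounds (φ1+π) ?_).1
    rw [exp_neg_add_pi]
    have hsplit : -Complex.exp ((-φ1:ℝ)*Complex.I) * (w 0 N)
        = Complex.exp ((-φ1:ℝ)*Complex.I) * (q2 - p1) := by
      rw [hw0N]; ring
    rw [hsplit]
    exact hsup1 q2 (Or.inr hq2)
  -- integer winding relations
  have hmang : ((cutArg (φ2+π) (w N 0) : ℝ) : Real.Angle)
      = ((cutArg φ1 (w N 0) : ℝ) : Real.Angle) := by
    rw [cutArg_angle _ (hne N 0), cutArg_angle _ (hne N 0)]
  obtain ⟨m, hm⟩ := Real.Angle.angle_eq_iff_two_pi_dvd_sub.1 hmang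
  have hnang : ((cutArg (φ1+π) (w 0 N) : ℝ) : Real.Angle)
      = ((cutArg φ2 (w 0 N) : ℝ) : Real.Angle) := by
    rw [cutArg_angle _ (hne 0 N), cutArg_angle _ (hne 0 N)]
  obtain ⟨n, hn⟩ := Real.Angle.angle_eq_iff_two_pi_dvd_sub.1 hnang
  -- m ≥ 1 and n ≥ 0
  have hm1 : (1:ℝ) ≤ (m:ℝ) := by
    have h0 : 0 < 2*π*(m:ℝ) := by
      rw [← hm]; linarith
    have : (0:ℝ) < (m:ℝ) := by nlinarith
    have : 0 < m := by exact_mod_cast this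
    exact_mod_cast this
  have hn0 : (0:ℝ) ≤ (n:ℝ) := by
    have h0 : -(2*π) < 2*π*(n:ℝ) := by
      rw [← hn]; linarith
    have : (-1:ℝ) < (n:ℝ) := by nlinarith
    have : (-1:ℤ) < n := by exact_mod_cast this
    have : 0 ≤ n := by omega
    exact_mod_cast this
  -- final contradiction
  have e1 : 2*π ≤ 2*π*(m:ℝ) := by nlinarith
  have e2 : 0 ≤ 2*π*(n:ℝ) := by nlinarith
  rw [hH0, hHN, hVN, hV0] at hmaster
  rw [hcut1, hcut2, hcut3, hcut4] at hmaster
  linarith [hm, hn]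


noncomputable def toC : EuclideanSpace ℝ (Fin 2) → ℂ :=
  fun v => (v 0 : ℂ) + (v 1 : ℂ) * Complex.I

lemma toC_re (v : EuclideanSpace ℝ (Fin 2)) : (toC v).re = v 0 := by
  simp [toC]

lemma toC_im (v : EuclideanSpace ℝ (Fin 2)) : (toC v).im = v 1 := by
  simp [toC]

lemma toC_continuous : Continuous toC := by
  apply Continuous.add
  · exact Complex.continuous_ofReal.comp ((continuous_apply 0).comp (PiLp.continuous_ofLp 2 _))
  · exact (Complex.continuous_ofReal.comp ((continuous_apply 1).comp (PiLp.continuous_ofLp 2 _))).mul continuous_const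

lemma toC_injective : Function.Injective toC := by
  intro u v h
  have h0 : u 0 = v 0 := by rw [← toC_re u, ← toC_re v, h]
  have h1 : u 1 = v 1 := by rw [← toC_im u, ← toC_im v, h]
  ext i
  fin_cases i <;> assumption

lemma inner_toC (φ : ℝ) (u : EuclideanSpace ℝ (Fin 2)) :
    (inner ℝ (dir φ) u : ℝ) = (Complex.exp ((-φ : ℝ) * Complex.I) * toC u).re := by
  rw [Complex.mul_re, Complex.exp_ofReal_mul_I_re, Complex.exp_ofReal_mul_I_im,
    toC_re, toC_im, Real.cos_neg, Real.sin_neg]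
  rw [PiLp.inner_apply]
  simp only [dir, WithLp.equiv_symm_apply, PiLp.toLp_apply, RCLike.inner_apply, conj_trivial]
  rw [Fin.sum_univ_two]
  simp only [Matrix.cons_val_zero, Matrix.cons_val_one, Matrix.head_cons]
  ring

/-- the "good direction" datum relative to an ordered pair of sets -/
def Datum (A B : Set ℂ) (φ : ℝ) : Prop :=
  ∃ p q : ℂ, ∃ s : ℝ, p ∈ A ∧ q ∈ B ∧ 0 < s ∧
    (∀ x ∈ A ∪ B, (Complex.exp ((-φ : ℝ) * Complex.I) * (x - p)).re ≤ 0) ∧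
    q - p = (s : ℂ) * (Complex.I * Complex.exp ((φ : ℝ) * Complex.I))

lemma core' (A B : Set ℂ) (hAne : A.Nonempty) (hBne : B.Nonempty) (hAc : IsCompact A)
    (hBc : IsCompact B) (hAconn : IsConnected A) (hBconn : IsConnected B)
    (hdisj : Disjoint A B) (φ φ' : ℝ) (hφ : φ ∈ Set.Ico 0 (2*π)) (hφ' : φ' ∈ Set.Ico 0 (2*π))
    (hne : φ ≠ φ') (h1 : Datum A B φ) (h2 : Datum A B φ') : False := by
  obtain ⟨p1, q1, s1, hp1, hq1, hs1, hsup1, he1⟩ := h1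
  obtain ⟨p2, q2, s2, hp2, hq2, hs2, hsup2, he2⟩ := h2
  rcases lt_or_gt_of_ne hne with h | h
  · exact core A B hAne hBne hAc hBc hAconn hBconn hdisj φ φ'
      (by linarith) (by linarith [hφ.1, hφ'.2])
      p1 q1 p2 q2 s1 s2 hs1 hs2 hp1 hq1 hp2 hq2 hsup1 hsup2 he1 he2
  · exact core A B hAne hBne hAc hBc hAconn hBconn hdisj φ' φ
      (by linarith) (by linarith [hφ'.1, hφ.2])
      p2 q2 p1 q1 s2 s1 hs2 hs1 hp2 hq2 hp1 hq1 hsup2 hsup1 he2 he1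

end AuxWinding

/-- For two disjoint nonempty compact connected sets `P, Q` in the plane,
there are at most two directions `φ ∈ [0, 2π)` such that the supporting line
of `P ∪ Q` in direction `φ` meets both `P` and `Q`. -/
theorem stmt_5 (P Q : Set (EuclideanSpace ℝ (Fin 2)))
    (hP : P.Nonempty) (hQ : Q.Nonempty)
    (hPc : IsCompact P) (hQc : IsCompact Q)
    (hPconn : IsConnected P) (hQconn : IsConnected Q)
    (hdisj : Disjoint P Q) :
    {φ : ℝ | φ ∈ Set.Ico 0 (2 * π) ∧
      (∃ p ∈ P, (inner ℝ (dir φ) p : ℝ) =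
        sSup ((fun x => (inner ℝ (dir φ) x : ℝ)) '' (P ∪ Q))) ∧
      (∃ q ∈ Q, (inner ℝ (dir φ) q : ℝ) =
        sSup ((fun x => (inner ℝ (dir φ) x : ℝ)) '' (P ∪ Q)))}.encard
      ≤ 2 := by
  set S := {φ : ℝ | φ ∈ Set.Ico 0 (2 * π) ∧
      (∃ p ∈ P, (inner ℝ (dir φ) p : ℝ) =
        sSup ((fun x => (inner ℝ (dir φ) x : ℝ)) '' (P ∪ Q))) ∧
      (∃ q ∈ Q, (inner ℝ (dir φ) q : ℝ) =
        sSup ((fun x => (inner ℝ (dir φ) x : ℝ)) '' (P ∪ Q)))} with hSdef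
  by_contra hcon
  push_neg at hcon
  obtain ⟨t, htS, ht3⟩ := Set.exists_subset_encard_eq
    (show (3:ℕ∞) ≤ S.encard by
      rcases le_or_gt 3 S.encard with h | h
      · exact h
      · exfalso
        apply absurd hcon
        push_neg
        exact Order.le_of_lt_add_one (by exact_mod_cast h))
  obtain ⟨a, b, c, hab, hac, hbc, rfl⟩ := Set.encard_eq_three.1 ht3
  -- image sets in ℂ
  set Pc := toC '' P with hPcdef
  set Qc := toC '' Q with hQcdef
  have hPcne : Pc.Nonempty := hP.image _
  have hQcne : Qc.Nonempty := hQ.image _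
  have hPcc : IsCompact Pc := hPc.image toC_continuous
  have hQcc : IsCompact Qc := hQc.image toC_continuous
  have hPcconn : IsConnected Pc := hPconn.image _ toC_continuous.continuousOn
  have hQcconn : IsConnected Qc := hQconn.image _ toC_continuous.continuousOn
  have hdisjc : Disjoint Pc Qc := by
    rw [hPcdef, hQcdef, Set.disjoint_image_iff toC_injective]
    exact hdisj
  -- each good direction gives a datum
  have hD : ∀ φ ∈ S, Datum Pc Qc φ ∨ Datum Qc Pc φ := by
    intro φ hφ
    obtain ⟨hIco, ⟨p, hpP, hpeq⟩, ⟨q, hqQ, hqeq⟩⟩ := hφ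
    have hcont : ContinuousOn (fun x => (inner ℝ (dir φ) x : ℝ)) (P ∪ Q) :=
      (Continuous.inner continuous_const continuous_id).continuousOn
    have hbdd : BddAbove ((fun x => (inner ℝ (dir φ) x : ℝ)) '' (P ∪ Q)) :=
      (hPc.union hQc).bddAbove_image hcont
    have hub : ∀ x ∈ P ∪ Q, (inner ℝ (dir φ) x : ℝ) ≤ (inner ℝ (dir φ) p : ℝ) := by
      intro x hx
      rw [hpeq]
      exact le_csSup hbdd (Set.mem_image_of_mem _ hx)
    have hsupC : ∀ z ∈ Pc ∪ Qc,
        (Complex.exp ((-φ : ℝ) * Complex.I) * (z - toC p)).re ≤ 0 := by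
      rintro z hz
      have : ∃ x ∈ P ∪ Q, toC x = z := by
        rcases hz with hz | hz
        · obtain ⟨x, hx, rfl⟩ := hz; exact ⟨x, Or.inl hx, rfl⟩
        · obtain ⟨x, hx, rfl⟩ := hz; exact ⟨x, Or.inr hx, rfl⟩
      obtain ⟨x, hx, rfl⟩ := this
      have := hub x hx
      rw [inner_toC, inner_toC] at this
      rw [mul_sub, Complex.sub_re]
      linarith
    -- the contact difference is orthogonal to the direction
    have hqp0 : (Complex.exp ((-φ : ℝ) * Complex.I) * (toC q - toC p)).re = 0 := by
      have h1 : (inner ℝ (dir φ) q : ℝ) = (inner ℝ (dir φ) p : ℝ) := by rw [hpeq, hqeq]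
      rw [inner_toC, inner_toC] at h1
      rw [mul_sub, Complex.sub_re, h1]
      ring
    set ξ := Complex.exp ((-φ : ℝ) * Complex.I) * (toC q - toC p) with hξdef
    have hexp1 : Complex.exp ((φ:ℝ) * Complex.I) * Complex.exp ((-φ:ℝ) * Complex.I) = 1 := by
      rw [← Complex.exp_add, show ((φ:ℝ):ℂ)*Complex.I + ((-φ:ℝ):ℂ)*Complex.I = 0 by
        push_cast; ring, Complex.exp_zero]
    have hdecomp : toC q - toC p = (ξ.im : ℂ) * (Complex.I * Complex.exp ((φ:ℝ) * Complex.I)) := by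
      have h2 : toC q - toC p = Complex.exp ((φ:ℝ) * Complex.I) * ξ := by
        rw [hξdef, ← mul_assoc, hexp1, one_mul]
      have h3 : ξ = (ξ.im : ℂ) * Complex.I := by
        nth_rewrite 1 [← Complex.re_add_im ξ]
        rw [hqp0]
        push_cast
        ring
      rw [h2]
      conv_lhs => rw [h3]
      ring
    have him0 : ξ.im ≠ 0 := by
      intro h0
      rw [h0] at hdecomp
      simp only [Complex.ofReal_zero, zero_mul] at hdecomp
      have : toC q = toC p := by
        have := sub_eq_zero.1 hdecomp
        exact this
      have hqp : q = p := toC_injective this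
      exact hdisj.ne_of_mem hpP hqQ (hqp ▸ rfl)
    rcases lt_or_gt_of_ne him0 with hneg | hpos
    · -- negative: swap roles
      right
      refine ⟨toC q, toC p, -ξ.im, Set.mem_image_of_mem _ hqQ, Set.mem_image_of_mem _ hpP,
        by linarith, ?_, ?_⟩
      · intro x hx
        have hx' : x ∈ Pc ∪ Qc := by rwa [Set.union_comm] at hx
        have h4 := hsupC x hx'
        have h5 : Complex.exp ((-φ : ℝ) * Complex.I) * (x - toC q)
            = Complex.exp ((-φ : ℝ) * Complex.I) * (x - toC p) - ξ := by
          rw [hξdef]; ring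
        rw [h5, Complex.sub_re, hqp0]
        linarith
      · rw [show toC p - toC q = -(toC q - toC p) by ring, hdecomp]
        push_cast
        ring
    · left
      exact ⟨toC p, toC q, ξ.im, Set.mem_image_of_mem _ hpP, Set.mem_image_of_mem _ hqQ,
        hpos, hsupC, hdecomp⟩
  -- pigeonhole among the three directions
  have haS := htS (show a ∈ ({a,b,c} : Set ℝ) by simp)
  have hbS := htS (show b ∈ ({a,b,c} : Set ℝ) by simp)
  have hcS := htS (show c ∈ ({a,b,c} : Set ℝ) by simp)
  have hIa : a ∈ Set.Ico 0 (2*π) := haS.1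
  have hIb : b ∈ Set.Ico 0 (2*π) := hbS.1
  have hIc : c ∈ Set.Ico 0 (2*π) := hcS.1
  have coreP := core' Pc Qc hPcne hQcne hPcc hQcc hPcconn hQcconn hdisjc
  have coreQ := core' Qc Pc hQcne hPcne hQcc hPcc hQcconn hPcconn hdisjc.symm
  rcases hD a haS with ha | ha <;> rcases hD b hbS with hb | hb <;> rcases hD c hcS with hc | hc
  · exact coreP a b hIa hIb hab ha hb
  · exact coreP a b hIa hIb hab ha hb
  · exact coreP a c hIa hIc hac ha hc
  · exact coreQ b c hIb hIc hbc hb hc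
  · exact coreP b c hIb hIc hbc hb hc
  · exact coreQ a c hIa hIc hac ha hc
  · exact coreQ a b hIa hIb hab ha hb
  · exact coreQ a b hIa hIb hab ha hb
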